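/- Let θ be a real number with 0 < θ < 1, let c ∈ ℂ, and let s_0, …, s_{m−1}, t_0, …, t_{n−1} ∈ ℂ satisfy |t_j − c| ≤ θ·|s_i − c| for all i, j, and set δ = min_{0≤i<m} |s_i − c| and assume δ > 0. Fix a positive integer ρ and define the m×ρ matrix F = (1/(s_i − c)^{ν+1})_{0≤i<m, 0≤ν<ρ} and the n×ρ matrix G = ((t_j − c)^ν)_{0≤j<n, 0≤ν<ρ}. Then s_i ≠ t_j for all i, j, so the m×n Cauchy matrix C = (1/(s_i − t_j)) is well defined, and every entry of E = C − F·G^T satisfies |E_{ij}| ≤ θ^ρ/((1 − θ)·δ); in particular |E| = max_{i,j}|E_{ij}| ≤ θ^ρ/((1 − θ)·δ) and rank(F·G^T) ≤ ρ. -/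

import Mathlib

private lemma geom_aux (r : ℂ) (hr : r ≠ 1) (ρ : ℕ) :
    (1 - r)⁻¹ - (r ^ ρ - 1) / (r - 1) = r ^ ρ * (1 - r)⁻¹ := by
  have h : 1 - r ≠ 0 := sub_ne_zero.mpr (Ne.symm hr)
  have h2 : r - 1 ≠ 0 := sub_ne_zero.mpr hr
  field_simp
  ring

private lemma cauchy_key (x y : ℂ) (hy : y ≠ 0) (hyx : y - x ≠ 0) (hxy1 : x / y ≠ 1)
    (ρ : ℕ) :
    (y - x)⁻¹ - ∑ ν : Fin ρ, (y ^ ((ν : ℕ) + 1))⁻¹ * x ^ (ν : ℕ)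
      = (x / y) ^ ρ * (y - x)⁻¹ := by
  have h1 : ∑ ν : Fin ρ, (y ^ ((ν : ℕ) + 1))⁻¹ * x ^ (ν : ℕ)
      = y⁻¹ * ∑ ν : Fin ρ, (x / y) ^ (ν : ℕ) := by
    rw [Finset.mul_sum]
    refine Finset.sum_congr rfl fun ν _ => ?_
    rw [div_pow, pow_succ, mul_inv, div_eq_mul_inv]
    ring
  rw [h1, Fin.sum_univ_eq_sum_range (fun ν => (x / y) ^ ν), geom_sum_eq hxy1]
  have hxy : y - x = y * (1 - x / y) := by field_simp
  rw [hxy, mul_inv]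
  have hkey := geom_aux (x / y) hxy1 ρ
  linear_combination y⁻¹ * hkey

/-- Corollary 7.1 of the paper: a Cauchy matrix `C = (1/(s_i - t_j))` with
`(θ, c)`-separated knot sets admits the explicit rank-`ρ` approximation
`F·Gᵀ`, `F = (1/(s_i - c)^{ν+1})`, `G = ((t_j - c)^ν)`, with entrywise error
at most `θ^ρ/((1 - θ)δ)`, where `δ = min_i |s_i - c| > 0`. -/
theorem cauchy_low_rank_approximation (m n : ℕ) (hm : 1 ≤ m) (hn : 1 ≤ n)
    (θ : ℝ) (hθ0 : 0 < θ) (hθ1 : θ < 1) (c : ℂ)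
    (s : Fin m → ℂ) (t : Fin n → ℂ)
    (hsep : ∀ i j, ‖t j - c‖ ≤ θ * ‖s i - c‖)
    (δ : ℝ) (hδ : δ = ⨅ i, ‖s i - c‖) (hδpos : 0 < δ)
    (ρ : ℕ) (hρ : 1 ≤ ρ)
    (F : Matrix (Fin m) (Fin ρ) ℂ)
    (hF : F = Matrix.of fun (i : Fin m) (ν : Fin ρ) => ((s i - c) ^ ((ν : ℕ) + 1))⁻¹)
    (G : Matrix (Fin n) (Fin ρ) ℂ)
    (hG : G = Matrix.of fun (j : Fin n) (ν : Fin ρ) => (t j - c) ^ (ν : ℕ)) :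
    (∀ i j, s i ≠ t j) ∧
      (∀ i j, ‖(s i - t j)⁻¹ - (F * G.transpose) i j‖ ≤
        θ ^ ρ / ((1 - θ) * δ)) ∧
      (F * G.transpose).rank ≤ ρ := by
  haveI : Nonempty (Fin m) := ⟨⟨0, hm⟩⟩
  have hδle : ∀ i, δ ≤ ‖s i - c‖ := by
    intro i
    rw [hδ]
    exact ciInf_le (Set.Finite.bddBelow (Set.finite_range _)) i
  -- basic facts per pair (i, j)
  have hy0 : ∀ i, (0:ℝ) < ‖s i - c‖ := fun i => lt_of_lt_of_le hδpos (hδle i)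
  have hxlt : ∀ i j, ‖t j - c‖ < ‖s i - c‖ := by
    intro i j
    calc ‖t j - c‖ ≤ θ * ‖s i - c‖ := hsep i j
      _ < 1 * ‖s i - c‖ := by
          exact mul_lt_mul_of_pos_right hθ1 (hy0 i)
      _ = ‖s i - c‖ := one_mul _
  have hne : ∀ i j, s i ≠ t j := by
    intro i j h
    have := hxlt i j
    rw [h] at this
    exact lt_irrefl _ this
  have hdist : ∀ i j, (1 - θ) * δ ≤ ‖s i - t j‖ := by
    intro i j
    have h1 : ‖s i - c‖ - ‖t j - c‖ ≤ ‖s i - t j‖ := by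
      have := norm_sub_norm_le (s i - c) (t j - c)
      calc ‖s i - c‖ - ‖t j - c‖
          ≤ ‖(s i - c) - (t j - c)‖ := this
        _ = ‖s i - t j‖ := by ring_nf
    have h2 : (1 - θ) * δ ≤ ‖s i - c‖ - ‖t j - c‖ := by
      have := hsep i j
      have := hδle i
      nlinarith
    linarith
  refine ⟨hne, ?_, ?_⟩
  · intro i j
    set x := t j - c with hx
    set y := s i - c with hyy
    have hyne : y ≠ 0 := by
      intro h
      have := hy0 i
      rw [← hyy, h] at this
      simp at this
    have hsub : y - x = s i - t j := by ring
    have hyxne : y - x ≠ 0 := by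
      rw [hsub]
      exact sub_ne_zero.mpr (hne i j)
    have hxyabs : ‖x / y‖ ≤ θ := by
      rw [norm_div, div_le_iff₀ (hy0 i)]
      exact hsep i j
    have hxy1 : x / y ≠ 1 := by
      intro h
      rw [h] at hxyabs
      simp at hxyabs
      linarith
    have hentry : (F * G.transpose) i j
        = ∑ ν : Fin ρ, (y ^ ((ν : ℕ) + 1))⁻¹ * x ^ (ν : ℕ) := by
      subst hF hG
      simp [Matrix.mul_apply]
      rfl
    rw [hentry, ← hsub, cauchy_key x y hyne hyxne hxy1 ρ]
    rw [norm_mul, norm_pow]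
    have habs : ‖(y - x)⁻¹‖ ≤ ((1 - θ) * δ)⁻¹ := by
      rw [norm_inv]
      apply inv_anti₀
      · exact mul_pos (by linarith) hδpos
      · rw [hsub]; exact hdist i j
    calc ‖x / y‖ ^ ρ * ‖(y - x)⁻¹‖
        ≤ θ ^ ρ * ((1 - θ) * δ)⁻¹ := by
          apply mul_le_mul (pow_le_pow_left₀ (by positivity) hxyabs ρ) habs (by positivity)
          positivity
      _ = θ ^ ρ / ((1 - θ) * δ) := by rw [div_eq_mul_inv]
  · calc (F * G.transpose).rank ≤ F.rank := Matrix.rank_mul_le_left F G.transpose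
      _ ≤ ρ := by simpa using F.rank_le_card_width
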